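/- arXiv:1205.4003 — 3 statements merged into one kernel-verified Lean document; each statement's English description precedes it below -/
import Mathlib

section
/- Let (𝒜, φ) be a non-commutative probability space and let {b_i}_{i∈ℕ} satisfy Condition (★) with real nonzero commutation coefficients satisfying relations (A)–(B). Let n ∈ ℕ, let V = {(w_1,z_1),…,(w_n,z_n)} ∈ 𝒫₂(2n) be a pair partition, let (i(1),…,i(2n)) ∈ ℕ^{2n} with (i(1),…,i(2n)) ~ V, and let ε(1),…,ε(2n) ∈ {1,*} with ε(w_j) ≠ ε(z_j) for each j. Then φ(b_{i(1)}^{ε(1)} ⋯ b_{i(2n)}^{ε(2n)}) = β · Π_{j=1}^{n} φ(b_{i(w_j)}^{ε(w_j)} b_{i(z_j)}^{ε(z_j)}), where β = [ Π_{(w_j,w_k,z_j,z_k) ∈ Cross(V)} μ_{ε(z_j),ε(w_k)}(i(z_j),i(w_k)) ] · [ Π_{(w_j,w_m,z_m,z_j) ∈ Nest(V)} μ_{ε(z_j),ε(z_m)}(i(z_j),i(z_m)) · μ_{ε(z_j),ε(w_m)}(i(z_j),i(w_m)) ]. -/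
open Filter MeasureTheory ProbabilityTheory
open scoped BigOperators ComplexOrder Classical

noncomputable section

/-- `sel a e` is `a^ε`: `a` if `e = false` (i.e. ε = 1) and `star a` if `e = true` (i.e. ε = ∗). -/
def sel {A : Type*} [Star A] (a : A) (e : Bool) : A := if e then star a else a

/-- The product `b_{i(1)}^{ε(1)} ⋯ b_{i(r)}^{ε(r)}`, indexed by a list of (index, exponent) pairs. -/
def listProd {A : Type*} [Monoid A] [Star A] (b : ℕ → A) (l : List (ℕ × Bool)) : A :=
  (l.map fun p => sel (b p.1) p.2).prod

/-- The product `b_{i(1)}^{ε(1)} ⋯ b_{i(r)}^{ε(r)}`, indexed by `Fin r`. -/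
def tupProd {A : Type*} [Monoid A] [Star A] (b : ℕ → A) {r : ℕ}
    (i : Fin r → ℕ) (eps : Fin r → Bool) : A :=
  (List.ofFn fun k => sel (b (i k)) (eps k)).prod

/-- The mixed moment `φ(X^{ε(1)} ⋯ X^{ε(r)})` of a single element `X`. -/
def smom {A : Type*} [Ring A] [StarRing A] [Algebra ℂ A] (φ : A →ₗ[ℂ] ℂ)
    (X : A) {r : ℕ} (eps : Fin r → Bool) : ℂ :=
  φ ((List.ofFn fun k => sel X (eps k)).prod)

/-- The commutation coefficients are nonzero reals. -/
def NonzeroCoeff (c : Bool → Bool → ℕ → ℕ → ℝ) : Prop :=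
  ∀ i j : ℕ, i ≠ j → ∀ e e' : Bool, c e e' i j ≠ 0

/-- Relations (A)–(B) on the commutation coefficients (`false` = 1, `true` = ∗):
`μ_{ε,ε'}(i,j) = 1/μ_{ε',ε}(j,i)`, `μ_{1,1}(i,j) = 1/μ_{∗,∗}(i,j)`,
`μ_{1,∗}(i,j) = 1/μ_{∗,1}(i,j)`. -/
def RelAB (c : Bool → Bool → ℕ → ℕ → ℝ) : Prop :=
  (∀ i j : ℕ, i ≠ j → ∀ e e' : Bool, c e e' i j = (c e' e j i)⁻¹) ∧
  (∀ i j : ℕ, i ≠ j → c false false i j = (c true true i j)⁻¹) ∧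
  (∀ i j : ℕ, i ≠ j → c false true i j = (c true false i j)⁻¹)

/-- Condition (★) for a sequence `b` in a complex ∗-probability space, with
commutation coefficients `c e e' i j = μ_{ε,ε'}(i,j)` (`false` = 1, `true` = ∗).
The factoring over naturally ordered products is stated in block form: a naturally
ordered product is a concatenation of nonempty blocks with constant indices, the
(distinct) block indices being strictly increasing. -/
structure StarCond {A : Type*} [Ring A] [StarRing A] [Algebra ℂ A]
    (φ : A →ₗ[ℂ] ℂ) (b : ℕ → A) (c : Bool → Bool → ℕ → ℕ → ℝ) : Prop where
  zero_mean : ∀ i, φ (b i) = 0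
  zero_mean_star : ∀ i, φ (star (b i)) = 0
  zero_bb : ∀ i, φ (b i * b i) = 0
  zero_ss : ∀ i, φ (star (b i) * star (b i)) = 0
  zero_sb : ∀ i, φ (star (b i) * b i) = 0
  covar : ∀ i j : ℕ, ∀ e e' : Bool,
    φ (sel (b i) e * sel (b i) e') = φ (sel (b j) e * sel (b j) e')
  bounded : ∀ r : ℕ, ∃ α : ℝ, 0 ≤ α ∧ ∀ l : List (ℕ × Bool), l.length = r →
    ‖φ (listProd b l)‖ ≤ α
  factors : ∀ L : List (ℕ × List Bool),
    List.Chain' (· < ·) (L.map Prod.fst) → (∀ p ∈ L, p.2 ≠ []) →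
    φ ((L.map fun p => (p.2.map (sel (b p.1))).prod).prod)
      = (L.map fun p => φ ((p.2.map (sel (b p.1))).prod)).prod
  commRel : ∀ i j : ℕ, i ≠ j → ∀ e e' : Bool,
    sel (b i) e * sel (b j) e' = ((c e' e j i : ℝ) : ℂ) • (sel (b j) e' * sel (b i) e)

/-- The normalized partial sum `S_N = (b 1 + ⋯ + b N)/√N`. -/
def pSum {A : Type*} [Ring A] [Algebra ℂ A] (b : ℕ → A) (N : ℕ) : A :=
  (((Real.sqrt N)⁻¹ : ℝ) : ℂ) • ∑ i ∈ Finset.Icc 1 N, b i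

/-- A pair partition `V = {(w 1, z 1), …, (w n, z n)}` of `{1, …, 2n}` (here of `Fin (2n)`),
with `w i < z i`, `w` strictly increasing, and the `w i, z i` exhausting `Fin (2n)`. -/
structure PairPartition (n : ℕ) where
  w : Fin n → Fin (2 * n)
  z : Fin n → Fin (2 * n)
  wz : ∀ i, w i < z i
  mono : StrictMono w
  bij : Function.Bijective fun p : Fin n × Bool => if p.2 then z p.1 else w p.1

instance (n : ℕ) : Fintype (PairPartition n) :=
  Fintype.ofInjective (fun V : PairPartition n => (V.w, V.z)) (by
    rintro ⟨w₁, z₁, h₁, h₂, h₃⟩ ⟨w₂, z₂, g₁, g₂, g₃⟩ h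
    simp only [Prod.mk.injEq] at h
    obtain ⟨rfl, rfl⟩ := h
    rfl)

/-- The crossings of a pair partition: pairs of blocks `(j, k)` with `w j < w k < z j < z k`. -/
def crossSet {n : ℕ} (V : PairPartition n) : Finset (Fin n × Fin n) :=
  Finset.univ.filter fun p => V.w p.1 < V.w p.2 ∧ V.w p.2 < V.z p.1 ∧ V.z p.1 < V.z p.2

/-- The nestings of a pair partition: pairs of blocks `(j, m)` with `w j < w m < z m < z j`. -/
def nestSet {n : ℕ} (V : PairPartition n) : Finset (Fin n × Fin n) :=
  Finset.univ.filter fun p => V.w p.1 < V.w p.2 ∧ V.w p.2 < V.z p.2 ∧ V.z p.2 < V.z p.1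

/-- `cross(V)`, the number of crossings. -/
def crossNum {n : ℕ} (V : PairPartition n) : ℕ := (crossSet V).card

/-- `nest(V)`, the number of nestings. -/
def nestNum {n : ℕ} (V : PairPartition n) : ℕ := (nestSet V).card

/-- Two positions lie in the same block of the pair partition `V`. -/
def sameBlock {n : ℕ} (V : PairPartition n) (k₁ k₂ : Fin (2 * n)) : Prop :=
  k₁ = k₂ ∨ ∃ m, (k₁ = V.w m ∧ k₂ = V.z m) ∨ (k₁ = V.z m ∧ k₂ = V.w m)

/-- `(i(1), …, i(2n)) ∼ V`: entries agree exactly on the blocks of `V`. -/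
def tupleEquiv {n : ℕ} {α : Type*} (V : PairPartition n) (i : Fin (2 * n) → α) : Prop :=
  ∀ k₁ k₂, i k₁ = i k₂ ↔ sameBlock V k₁ k₂

/-- The tuples in `[N]^{2n} = {1, …, N}^{2n}` that are equivalent to `V`. -/
def tuples (n N : ℕ) (V : PairPartition n) : Finset (Fin (2 * n) → ℕ) :=
  (Fintype.piFinset fun _ : Fin (2 * n) => Finset.Icc 1 N).filter fun i => tupleEquiv V i

/-- `β^{ε(1),…,ε(2n)}_{i(1),…,i(2n)}`: the product over crossings of `V` of
`μ_{ε(z_j),ε(w_k)}(i(z_j),i(w_k))` times the product over nestings of `V` of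
`μ_{ε(z_j),ε(z_m)}(i(z_j),i(z_m)) · μ_{ε(z_j),ε(w_m)}(i(z_j),i(w_m))`. -/
def betaProd (n : ℕ) (V : PairPartition n) (eps : Fin (2 * n) → Bool)
    (c : Bool → Bool → ℕ → ℕ → ℝ) (i : Fin (2 * n) → ℕ) : ℝ :=
  (∏ p ∈ crossSet V, c (eps (V.z p.1)) (eps (V.w p.2)) (i (V.z p.1)) (i (V.w p.2))) *
  ∏ p ∈ nestSet V,
    c (eps (V.z p.1)) (eps (V.z p.2)) (i (V.z p.1)) (i (V.z p.2)) *
      c (eps (V.z p.1)) (eps (V.w p.2)) (i (V.z p.1)) (i (V.w p.2))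

/-- `X_N = N^{-n} Σ_{(i(1),…,i(2n)) ∼ V} β^{ε(1),…,ε(2n)}_{i(1),…,i(2n)}`, whose limit
(when it exists) is `λ_{V,ε(1),…,ε(2n)}`. -/
def lambdaSum (n : ℕ) (V : PairPartition n) (eps : Fin (2 * n) → Bool)
    (c : Bool → Bool → ℕ → ℕ → ℝ) (N : ℕ) : ℝ :=
  ((N : ℝ)⁻¹) ^ n * ∑ i ∈ tuples n N V, betaProd n V eps c i

/-- One-pair standard prescription: for `x = μ(i,j)` (with `i < j`),
`μ_{∗,∗} = x`, `μ_{∗,1} = t·x`, `μ_{1,1} = x⁻¹`, `μ_{1,∗} = (t·x)⁻¹`. -/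
def prescOne (t x : ℝ) (e e' : Bool) : ℝ :=
  if e then (if e' then x else t * x) else (if e' then (t * x)⁻¹ else x⁻¹)

/-- The standard prescription of commutation coefficients from `{μ(i,j)}_{i<j}`,
extended to `i > j` by `μ_{ε',ε}(j,i) = 1/μ_{ε,ε'}(i,j)`. -/
def presc (t : ℝ) (m : ℕ → ℕ → ℝ) (e e' : Bool) (i j : ℕ) : ℝ :=
  if i < j then prescOne t (m i j) e e' else (prescOne t (m j i) e' e)⁻¹

/-- The index set `{(i,j) : 1 ≤ i < j}` of the random commutation coefficients. -/
def PairIdx : Type := {p : ℕ × ℕ // 1 ≤ p.1 ∧ p.1 < p.2}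

/-- `σ_x = [[1,0],[0,√t·x]]`. -/
def sigmaM (t x : ℝ) : Matrix (Fin 2) (Fin 2) ℝ := !![1, 0; 0, Real.sqrt t * x]

/-- `γ = [[0,1],[0,0]]`. -/
def gammaM : Matrix (Fin 2) (Fin 2) ℝ := !![0, 1; 0, 0]

/-- The two-parameter Jordan–Wigner matrix
`b_{n,i} = σ_{μ(1,i)} ⊗ ⋯ ⊗ σ_{μ(i-1,i)} ⊗ γ ⊗ σ₁^{⊗(n-i)} ∈ M₂(ℝ)^{⊗n}`,
realized on the index set `Fin n → Fin 2` (tensor/Kronecker products of matrices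
have entries the products of the entries of the factors). -/
def jw (t : ℝ) (m : ℕ → ℕ → ℝ) (n i : ℕ) : Matrix (Fin n → Fin 2) (Fin n → Fin 2) ℝ :=
  Matrix.of fun x y => ∏ k : Fin n,
    (if (k : ℕ) + 1 < i then sigmaM t (m ((k : ℕ) + 1) i)
     else if (k : ℕ) + 1 = i then gammaM
     else sigmaM t 1) (x k) (y k)

/-- `φ_n(a) = ⟨a e₀, e₀⟩ = a₀₀`. -/
def phiM (n : ℕ) (a : Matrix (Fin n → Fin 2) (Fin n → Fin 2) ℝ) : ℝ :=
  a (fun _ => 0) (fun _ => 0)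

/-- The normalized partial sum `S_N = (b_{N,1} + ⋯ + b_{N,N})/√N` of Jordan–Wigner matrices. -/
def jwS (t : ℝ) (m : ℕ → ℕ → ℝ) (N : ℕ) : Matrix (Fin N → Fin 2) (Fin N → Fin 2) ℝ :=
  (Real.sqrt N)⁻¹ • ∑ i ∈ Finset.Icc 1 N, jw t m N i


section AuxLemmas

lemma listProd_cons {A : Type*} [Monoid A] [Star A] (b : ℕ → A) (p : ℕ × Bool) (l) :
    listProd b (p :: l) = sel (b p.1) p.2 * listProd b l := by simp [listProd]

lemma listProd_append {A : Type*} [Monoid A] [Star A] (b : ℕ → A) (l1 l2) :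
    listProd b (l1 ++ l2) = listProd b l1 * listProd b l2 := by simp [listProd]

lemma ofFn_split {α : Type*} {r : ℕ} (t : ℕ) (h : t ≤ r) (f : Fin r → α) :
    List.ofFn f = (List.ofFn fun k : Fin t => f ⟨k, lt_of_lt_of_le k.2 h⟩)
      ++ (List.ofFn fun k : Fin (r - t) => f ⟨t + k, by omega⟩) := by
  apply List.ext_getElem
  · simp; omega
  · intro k h1 h2
    rcases lt_or_ge k t with hk | hk
    · rw [List.getElem_append_left (by simpa using hk)]
      simp
    · rw [List.getElem_append_right (by simpa using hk)]
      simp only [List.getElem_ofFn, List.length_ofFn]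
      congr 1
      exact Fin.ext (by simp; omega)

variable {A : Type*} [Ring A] [StarRing A] [Algebra ℂ A]
    (φ : A →ₗ[ℂ] ℂ) (b : ℕ → A) (c : Bool → Bool → ℕ → ℕ → ℝ)

/-- Move a letter `q` to the left across a list `l` of letters with different indices. -/
lemma move_left (hcond : StarCond φ b c) (q : ℕ × Bool) :
    ∀ l : List (ℕ × Bool), (∀ p ∈ l, p.1 ≠ q.1) →
    listProd b l * sel (b q.1) q.2
      = (((l.map fun p => c q.2 p.2 q.1 p.1).prod : ℝ) : ℂ) •
          (sel (b q.1) q.2 * listProd b l) := by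
  intro l
  induction l with
  | nil => intro _; simp [listProd]
  | cons p l ih =>
    intro hl
    have hp : p.1 ≠ q.1 := hl p (by simp)
    have ihl := ih (fun p hp => hl p (by simp [hp]))
    rw [listProd_cons, mul_assoc, ihl, mul_smul_comm, ← mul_assoc,
      hcond.commRel p.1 q.1 hp p.2 q.2, List.map_cons, List.prod_cons]
    rw [smul_mul_assoc, smul_smul, Complex.ofReal_mul]
    ring_nf
    rw [mul_assoc]


lemma pair_swap (hcond : StarCond φ b c) {i j : ℕ} (hij : i ≠ j) (e e' f f' : Bool) :
    (sel (b i) e * sel (b i) e') * (sel (b j) f * sel (b j) f')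
      = (((c f e j i * c f e' j i) * (c f' e j i * c f' e' j i) : ℝ) : ℂ) •
        ((sel (b j) f * sel (b j) f') * (sel (b i) e * sel (b i) e')) := by
  have h1 := move_left φ b c hcond (j, f) ([(i,e),(i,e')]) (by simp [hij])
  have h2 := move_left φ b c hcond (j, f') ([(i,e),(i,e')]) (by simp [hij])
  simp only [listProd, List.map_cons, List.map_nil, List.prod_cons, List.prod_nil,
    mul_one] at h1 h2
  calc (sel (b i) e * sel (b i) e') * (sel (b j) f * sel (b j) f')
      = ((sel (b i) e * sel (b i) e') * sel (b j) f) * sel (b j) f' :=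
        (mul_assoc (sel (b i) e * sel (b i) e') (sel (b j) f) (sel (b j) f')).symm
    _ = (((c f e j i * c f e' j i : ℝ) : ℂ) •
          (sel (b j) f * (sel (b i) e * sel (b i) e'))) * sel (b j) f' := by rw [h1]
    _ = ((c f e j i * c f e' j i : ℝ) : ℂ) •
          (sel (b j) f * ((sel (b i) e * sel (b i) e') * sel (b j) f')) := by
        rw [smul_mul_assoc, mul_assoc]
    _ = ((c f e j i * c f e' j i : ℝ) : ℂ) •
          (sel (b j) f * (((c f' e j i * c f' e' j i : ℝ) : ℂ) •
            (sel (b j) f' * (sel (b i) e * sel (b i) e')))) := by rw [h2]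
    _ = (((c f e j i * c f e' j i) * (c f' e j i * c f' e' j i) : ℝ) : ℂ) •
          (sel (b j) f * (sel (b j) f' * (sel (b i) e * sel (b i) e'))) := by
        rw [mul_smul_comm, smul_smul, ← Complex.ofReal_mul]
    _ = _ := by rw [← mul_assoc (sel (b j) f) (sel (b j) f')]

lemma coeff_one (hnz : NonzeroCoeff c) (hAB : RelAB c) {j i : ℕ} (hji : j ≠ i)
    {e e' f f' : Bool} (he : e ≠ e') (hf : f ≠ f') :
    (c f e j i * c f e' j i) * (c f' e j i * c f' e' j i) = 1 := by
  have h1 := hAB.2.1 j i hji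
  have h2 := hAB.2.2 j i hji
  have n1 := hnz j i hji true true
  have n2 := hnz j i hji true false
  cases e <;> cases e' <;> simp at he <;> cases f <;> cases f' <;> simp at hf <;>
    rw [h1, h2] <;> field_simp <;> ring

lemma pair_commute (hnz : NonzeroCoeff c) (hAB : RelAB c) (hcond : StarCond φ b c)
    {i j : ℕ} (hij : i ≠ j) {e e' f f' : Bool} (he : e ≠ e') (hf : f ≠ f') :
    Commute (sel (b i) e * sel (b i) e') (sel (b j) f * sel (b j) f') := by
  have := pair_swap φ b c hcond hij e e' f f'
  rw [coeff_one c hnz hAB (Ne.symm hij) he hf] at this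
  simp at this; exact this

lemma phi_pairs (hnz : NonzeroCoeff c) (hAB : RelAB c) (hcond : StarCond φ b c)
    (L : List (ℕ × Bool × Bool))
    (hd : L.Pairwise fun p q => p.1 ≠ q.1)
    (hee : ∀ p ∈ L, p.2.1 ≠ p.2.2) :
    φ ((L.map fun p => sel (b p.1) p.2.1 * sel (b p.1) p.2.2).prod)
      = (L.map fun p => φ (sel (b p.1) p.2.1 * sel (b p.1) p.2.2)).prod := by
  set r : (ℕ × Bool × Bool) → (ℕ × Bool × Bool) → Prop := fun p q => p.1 ≤ q.1 with hr
  haveI : DecidableRel r := fun a b => Nat.decLe _ _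
  haveI : IsTotal (ℕ × Bool × Bool) r := ⟨fun a b => le_total a.1 b.1⟩
  haveI : IsTrans (ℕ × Bool × Bool) r := ⟨fun a b cc h h' => le_trans h h'⟩
  set L' := L.insertionSort r with hL'
  have hperm : L'.Perm L := List.perm_insertionSort r L
  have hsorted : L'.Pairwise r := List.pairwise_insertionSort r L
  have hsymm : Symmetric fun p q : ℕ × Bool × Bool => p.1 ≠ q.1 := fun p q h => Ne.symm h
  have hd' : L'.Pairwise fun p q => p.1 ≠ q.1 :=
    (List.Perm.pairwise_iff (R := fun p q : ℕ × Bool × Bool => p.1 ≠ q.1) (fun h => Ne.symm h) hperm).mpr hd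
  have hee' : ∀ p ∈ L', p.2.1 ≠ p.2.2 := fun p hp => hee p (hperm.mem_iff.mp hp)
  have hlt : L'.Pairwise fun p q => p.1 < q.1 :=
    (hsorted.and hd').imp fun h => lt_of_le_of_ne h.1 h.2
  set g : (ℕ × Bool × Bool) → A := fun p => sel (b p.1) p.2.1 * sel (b p.1) p.2.2 with hg
  have hprod : (L.map g).prod = (L'.map g).prod := by
    refine ((hperm.map g).prod_eq' ?_).symm
    rw [List.pairwise_map]
    refine hd'.imp_of_mem ?_
    intro p q hp hq hne
    exact pair_commute φ b c hnz hAB hcond hne (hee' p hp) (hee' q hq)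
  have hphiprod : (L.map fun p => φ (g p)).prod = (L'.map fun p => φ (g p)).prod :=
    ((hperm.map fun p => φ (g p)).prod_eq).symm
  rw [hprod, hphiprod]
  have hfact := hcond.factors (L'.map fun p => (p.1, [p.2.1, p.2.2])) ?_ ?_
  · simpa only [hg, List.map_map, Function.comp_def, List.map_cons, List.map_nil,
      List.prod_cons, List.prod_nil, mul_one] using hfact
  · rw [List.map_map]
    have : (Prod.fst ∘ fun p : ℕ × Bool × Bool => (p.1, [p.2.1, p.2.2])) = Prod.fst := rfl
    rw [this]
    exact (List.isChain_map Prod.fst).mpr (hlt.isChain)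
  · intro p hp
    rw [List.mem_map] at hp
    obtain ⟨q, hq, rfl⟩ := hp
    simp

end AuxLemmas


section Restriction

/-- `embN z0 k`: the `k`-th element of `{1,...} \\ {z0}` (`0`-indexed). -/
def embN (z0 k : ℕ) : ℕ := if k + 1 < z0 then k + 1 else k + 2

/-- `delN z0 a`: inverse of `embN z0` on `{1,...} \\ {z0}`. -/
def delN (z0 a : ℕ) : ℕ := if a < z0 then a - 1 else a - 2

lemma delN_embN (z0 k : ℕ) : delN z0 (embN z0 k) = k := by
  simp only [embN, delN]; split_ifs <;> omega

lemma embN_delN {z0 a : ℕ} (h1 : 1 ≤ a) (h2 : a ≠ z0) (h3 : 1 ≤ z0) :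
    embN z0 (delN z0 a) = a := by
  simp only [embN, delN]; split_ifs <;> omega

lemma delN_lt_delN {z0 a b : ℕ} (hz : 1 ≤ z0) (ha1 : 1 ≤ a) (ha2 : a ≠ z0)
    (hb1 : 1 ≤ b) (hb2 : b ≠ z0) :
    delN z0 a < delN z0 b ↔ a < b := by
  simp only [delN]; split_ifs <;> omega

namespace PairPartition

variable {n : ℕ}

lemma w_ne_z (V : PairPartition n) (j k : Fin n) : V.w j ≠ V.z k := by
  intro h
  have := V.bij.injective (a₁ := (j, false)) (a₂ := (k, true)) (by simpa using h)
  simp at this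

lemma z_inj (V : PairPartition n) : Function.Injective V.z := by
  intro j k h
  have := V.bij.injective (a₁ := (j, true)) (a₂ := (k, true)) (by simpa using h)
  simpa using this

lemma cover (V : PairPartition n) (k : Fin (2*n)) : ∃ m, k = V.w m ∨ k = V.z m := by
  obtain ⟨⟨m, bb⟩, hp⟩ := V.bij.surjective k
  cases bb
  · exact ⟨m, Or.inl (by simpa using hp.symm)⟩
  · exact ⟨m, Or.inr (by simpa using hp.symm)⟩

lemma w_min (V : PairPartition n) (hn : 0 < n) (k : Fin (2*n)) :
    V.w ⟨0, hn⟩ ≤ k := by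
  obtain ⟨m, hm | hm⟩ := V.cover k
  · subst hm
    exact V.mono.monotone (by simp [Fin.le_def])
  · subst hm
    exact le_of_lt (lt_of_le_of_lt (V.mono.monotone (by simp [Fin.le_def])) (V.wz m))

lemma w_zero (V : PairPartition (n+1)) : (V.w 0 : ℕ) = 0 := by
  have h := V.w_min (Nat.succ_pos n) ⟨0, by omega⟩
  have h2 : (⟨0, Nat.succ_pos n⟩ : Fin (n+1)) = 0 := rfl
  rw [h2] at h
  exact Nat.le_zero.mp (Fin.le_def.mp h)

lemma z0_pos (V : PairPartition (n+1)) : 1 ≤ (V.z 0 : ℕ) := by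
  have h := Fin.lt_def.mp (V.wz 0)
  have h2 := V.w_zero
  omega

variable (V : PairPartition (n+1))

lemma w_succ_pos (j : Fin n) : 1 ≤ (V.w j.succ : ℕ) := by
  have h := Fin.lt_def.mp (V.mono (Fin.succ_pos j))
  have h0 := V.w_zero
  omega

lemma z_succ_pos (j : Fin n) : 1 ≤ (V.z j.succ : ℕ) := by
  have h := Fin.lt_def.mp (V.wz j.succ)
  have := V.w_succ_pos j
  omega

lemma w_succ_ne_z0 (j : Fin n) : (V.w j.succ : ℕ) ≠ (V.z 0 : ℕ) :=
  fun h => V.w_ne_z j.succ 0 (Fin.ext h)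

lemma z_succ_ne_z0 (j : Fin n) : (V.z j.succ : ℕ) ≠ (V.z 0 : ℕ) :=
  fun h => (Fin.succ_ne_zero j) (V.z_inj (Fin.ext h))

lemma delN_fin_inj {a b : Fin (2*(n+1))} (ha1 : 1 ≤ (a:ℕ)) (ha2 : (a:ℕ) ≠ (V.z 0:ℕ))
    (hb1 : 1 ≤ (b:ℕ)) (hb2 : (b:ℕ) ≠ (V.z 0:ℕ))
    (h : delN (V.z 0) a = delN (V.z 0) b) : a = b := by
  refine Fin.ext ?_
  rw [← embN_delN ha1 ha2 V.z0_pos, ← embN_delN hb1 hb2 V.z0_pos, h]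

/-- The restriction of a pair partition of `{0,…,2n+1}` obtained by removing the block
`(w 0, z 0) = (0, z 0)` and relabeling the remaining positions. -/
def rest : PairPartition n where
  w j := ⟨delN (V.z 0) (V.w j.succ), by
    have h1 := V.w_succ_pos j
    have h2 := (V.w j.succ).2
    have h3 := (V.z 0).2
    have h4 := V.w_succ_ne_z0 j
    have hj := j.2
    simp only [delN]; split_ifs <;> omega⟩
  z j := ⟨delN (V.z 0) (V.z j.succ), by
    have h1 := V.z_succ_pos j
    have h2 := (V.z j.succ).2
    have h3 := (V.z 0).2
    have h4 := V.z_succ_ne_z0 j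
    have hj := j.2
    simp only [delN]; split_ifs <;> omega⟩
  wz j := by
    rw [Fin.lt_def]
    exact (delN_lt_delN V.z0_pos (V.w_succ_pos j) (V.w_succ_ne_z0 j)
      (V.z_succ_pos j) (V.z_succ_ne_z0 j)).mpr (Fin.lt_def.mp (V.wz j.succ))
  mono := by
    intro a b hab
    rw [Fin.lt_def]
    exact (delN_lt_delN V.z0_pos (V.w_succ_pos a) (V.w_succ_ne_z0 a)
      (V.w_succ_pos b) (V.w_succ_ne_z0 b)).mpr
      (Fin.lt_def.mp (V.mono (Fin.succ_lt_succ_iff.mpr hab)))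
  bij := by
    rw [Fintype.bijective_iff_injective_and_card]
    constructor
    · rintro ⟨p1, pb⟩ ⟨q1, qb⟩ h
      simp only at h
      have hval : delN (V.z 0) (((if pb then V.z p1.succ else V.w p1.succ) : Fin (2*(n+1))) : ℕ)
          = delN (V.z 0) (((if qb then V.z q1.succ else V.w q1.succ) : Fin (2*(n+1))) : ℕ) := by
        cases pb <;> cases qb <;> simpa using congrArg Fin.val h
      have hpos : (if pb then V.z p1.succ else V.w p1.succ)
          = (if qb then V.z q1.succ else V.w q1.succ) := by
        refine V.delN_fin_inj ?_ ?_ ?_ ?_ hval <;> cases pb <;> cases qb <;>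
          simp [V.w_succ_pos, V.z_succ_pos, V.w_succ_ne_z0, V.z_succ_ne_z0]
      have := V.bij.injective (a₁ := (p1.succ, pb)) (a₂ := (q1.succ, qb)) (by
        cases pb <;> cases qb <;> simpa using hpos)
      simp only [Prod.mk.injEq] at this
      exact Prod.ext (Fin.succ_injective _ this.1) this.2
    · simp [Fintype.card_prod]; omega

/-- Embedding of positions of the restricted pair partition into the original ones. -/
def embF (k : Fin (2*n)) : Fin (2*(n+1)) :=
  ⟨embN (V.z 0) k, by
    have hk := k.2
    have h3 := (V.z 0).2
    simp only [embN]; split_ifs <;> omega⟩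

lemma embF_inj : Function.Injective V.embF := by
  intro a b h
  have := congrArg Fin.val h
  simp only [embF] at this
  exact Fin.ext (by rw [← delN_embN (V.z 0) a, ← delN_embN (V.z 0) b, this])

lemma embF_pos (k : Fin (2*n)) : 1 ≤ (V.embF k : ℕ) := by
  simp only [embF, embN]; split_ifs <;> omega

lemma embF_ne_z0 (k : Fin (2*n)) : (V.embF k : ℕ) ≠ (V.z 0 : ℕ) := by
  simp only [embF, embN]; split_ifs <;> omega

lemma embF_rest_w (j : Fin n) : V.embF (V.rest.w j) = V.w j.succ :=
  Fin.ext (embN_delN (V.w_succ_pos j) (V.w_succ_ne_z0 j) V.z0_pos)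

lemma embF_rest_z (j : Fin n) : V.embF (V.rest.z j) = V.z j.succ :=
  Fin.ext (embN_delN (V.z_succ_pos j) (V.z_succ_ne_z0 j) V.z0_pos)

lemma rest_tupleEquiv (i : Fin (2*(n+1)) → ℕ) (hiV : tupleEquiv V i) :
    tupleEquiv V.rest (i ∘ V.embF) := by
  intro k1 k2
  simp only [Function.comp_apply]
  rw [hiV (V.embF k1) (V.embF k2)]
  constructor
  · rintro (h | ⟨m, ⟨h1, h2⟩ | ⟨h1, h2⟩⟩)
    · exact Or.inl (V.embF_inj h)
    · have hm0 : m ≠ 0 := by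
        intro hm; subst hm
        have := V.embF_ne_z0 k2
        rw [h2] at this; exact this rfl
      refine Or.inr ⟨m.pred hm0, Or.inl ⟨V.embF_inj ?_, V.embF_inj ?_⟩⟩
      · rw [V.embF_rest_w, Fin.succ_pred, ← h1]
      · rw [V.embF_rest_z, Fin.succ_pred, ← h2]
    · have hm0 : m ≠ 0 := by
        intro hm; subst hm
        have := V.embF_ne_z0 k1
        rw [h1] at this; exact this rfl
      refine Or.inr ⟨m.pred hm0, Or.inr ⟨V.embF_inj ?_, V.embF_inj ?_⟩⟩
      · rw [V.embF_rest_z, Fin.succ_pred, ← h1]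
      · rw [V.embF_rest_w, Fin.succ_pred, ← h2]
  · rintro (h | ⟨m, ⟨h1, h2⟩ | ⟨h1, h2⟩⟩)
    · exact Or.inl (congrArg V.embF h)
    · subst h1; subst h2
      exact Or.inr ⟨m.succ, Or.inl ⟨V.embF_rest_w m, V.embF_rest_z m⟩⟩
    · subst h1; subst h2
      exact Or.inr ⟨m.succ, Or.inr ⟨V.embF_rest_z m, V.embF_rest_w m⟩⟩

lemma embF_lt_embF (x y : Fin (2*n)) : V.embF x < V.embF y ↔ x < y := by
  simp only [embF, Fin.lt_def, embN]
  split_ifs <;> omega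

end PairPartition

section BetaRec

open PairPartition

variable {n : ℕ}

lemma beta_rec (V : PairPartition (n+1)) (eps : Fin (2*(n+1)) → Bool)
    (c : Bool → Bool → ℕ → ℕ → ℝ) (i : Fin (2*(n+1)) → ℕ) :
    betaProd (n+1) V eps c i =
      (∏ k : Fin ((V.z 0 : ℕ) - 1),
        c (eps (V.z 0)) (eps ⟨1+(k:ℕ), by have := k.2; have := (V.z 0).2; omega⟩)
          (i (V.z 0)) (i ⟨1+(k:ℕ), by have := k.2; have := (V.z 0).2; omega⟩)) *
      betaProd n V.rest (eps ∘ V.embF) c (i ∘ V.embF) := by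
  classical
  set f : Fin (2*(n+1)) → ℝ := fun a => c (eps (V.z 0)) (eps a) (i (V.z 0)) (i a) with hf
  set F : Fin (n+1) × Fin (n+1) → ℝ :=
    fun p => c (eps (V.z p.1)) (eps (V.w p.2)) (i (V.z p.1)) (i (V.w p.2)) with hF
  set G : Fin (n+1) × Fin (n+1) → ℝ :=
    fun p => c (eps (V.z p.1)) (eps (V.z p.2)) (i (V.z p.1)) (i (V.z p.2)) *
      c (eps (V.z p.1)) (eps (V.w p.2)) (i (V.z p.1)) (i (V.w p.2)) with hG
  set Cr0 : Finset (Fin (n+1)) :=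
    Finset.univ.filter (fun m => V.w 0 < V.w m ∧ V.w m < V.z 0 ∧ V.z 0 < V.z m) with hCr0
  set Ne0 : Finset (Fin (n+1)) :=
    Finset.univ.filter (fun m => V.w 0 < V.w m ∧ V.w m < V.z m ∧ V.z m < V.z 0) with hNe0
  -- Splitting the cross product
  have hsplitC : ∏ p ∈ crossSet V, F p
      = (∏ p ∈ (crossSet V).filter (fun p => p.1 = 0), F p) *
        ∏ p ∈ (crossSet V).filter (fun p => ¬ p.1 = 0), F p :=
    (Finset.prod_filter_mul_prod_filter_not _ _ _).symm
  have hsplitN : ∏ p ∈ nestSet V, G p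
      = (∏ p ∈ (nestSet V).filter (fun p => p.1 = 0), G p) *
        ∏ p ∈ (nestSet V).filter (fun p => ¬ p.1 = 0), G p :=
    (Finset.prod_filter_mul_prod_filter_not _ _ _).symm
  -- the `p.1 = 0` parts
  have hC0 : ∏ p ∈ (crossSet V).filter (fun p => p.1 = 0), F p = ∏ m ∈ Cr0, f (V.w m) := by
    refine Finset.prod_bij' (fun p _ => p.2) (fun m _ => ((0 : Fin (n+1)), m)) ?_ ?_ ?_ ?_ ?_
    · intro p hp
      simp only [crossSet, Finset.mem_filter, Finset.mem_univ, true_and] at hp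
      obtain ⟨⟨h1, h2, h3⟩, h0⟩ := hp
      rw [h0] at h1 h2 h3
      show p.2 ∈ Cr0
      simp only [hCr0, Finset.mem_filter, Finset.mem_univ, true_and]
      exact ⟨h1, h2, h3⟩
    · intro m hm
      simp only [hCr0, Finset.mem_filter, Finset.mem_univ, true_and] at hm
      simp only [crossSet, Finset.mem_filter, Finset.mem_univ, true_and]
      exact ⟨hm, trivial⟩
    · intro p hp
      simp only [crossSet, Finset.mem_filter] at hp
      exact (Prod.ext hp.2.symm rfl)
    · intro m _; rfl
    · intro p hp
      simp only [crossSet, Finset.mem_filter] at hp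
      rw [hF, hf]
      simp only [hp.2]
  have hN0 : ∏ p ∈ (nestSet V).filter (fun p => p.1 = 0), G p
      = ∏ m ∈ Ne0, f (V.z m) * f (V.w m) := by
    refine Finset.prod_bij' (fun p _ => p.2) (fun m _ => ((0 : Fin (n+1)), m)) ?_ ?_ ?_ ?_ ?_
    · intro p hp
      simp only [nestSet, Finset.mem_filter, Finset.mem_univ, true_and] at hp
      obtain ⟨⟨h1, h2, h3⟩, h0⟩ := hp
      rw [h0] at h1 h3
      show p.2 ∈ Ne0
      simp only [hNe0, Finset.mem_filter, Finset.mem_univ, true_and]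
      exact ⟨h1, h2, h3⟩
    · intro m hm
      simp only [hNe0, Finset.mem_filter, Finset.mem_univ, true_and] at hm
      simp only [nestSet, Finset.mem_filter, Finset.mem_univ, true_and]
      exact ⟨hm, trivial⟩
    · intro p hp
      simp only [nestSet, Finset.mem_filter] at hp
      exact (Prod.ext hp.2.symm rfl)
    · intro m _; rfl
    · intro p hp
      simp only [nestSet, Finset.mem_filter] at hp
      rw [hG, hf]
      simp only [hp.2]
  -- the `p.1 ≠ 0` parts are the cross/nest products of the restriction
  have hCrest : ∏ p ∈ (crossSet V).filter (fun p => ¬ p.1 = 0), F p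
      = ∏ p ∈ crossSet V.rest,
          c ((eps ∘ V.embF) (V.rest.z p.1)) ((eps ∘ V.embF) (V.rest.w p.2))
            ((i ∘ V.embF) (V.rest.z p.1)) ((i ∘ V.embF) (V.rest.w p.2)) := by
    refine Finset.prod_bij' (fun p hp => (p.1.pred ?_, p.2.pred ?_))
      (fun q _ => (q.1.succ, q.2.succ)) ?_ ?_ ?_ ?_ ?_
    · simp only [crossSet, Finset.mem_filter] at hp
      exact hp.2
    · simp only [crossSet, Finset.mem_filter, Finset.mem_univ, true_and] at hp
      intro h0
      rw [h0] at hp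
      have h1 : p.1 < (0 : Fin (n+1)) := V.mono.lt_iff_lt.mp hp.1.1
      exact absurd h1 (Fin.not_lt_zero _)
    · intro p hp
      simp only [crossSet, Finset.mem_filter, Finset.mem_univ, true_and] at hp ⊢
      obtain ⟨⟨h1, h2, h3⟩, h0⟩ := hp
      refine ⟨?_, ?_, ?_⟩
      · rw [← V.embF_lt_embF, V.embF_rest_w, V.embF_rest_w, Fin.succ_pred, Fin.succ_pred]
        exact h1
      · rw [← V.embF_lt_embF, V.embF_rest_w, V.embF_rest_z, Fin.succ_pred, Fin.succ_pred]
        exact h2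
      · rw [← V.embF_lt_embF, V.embF_rest_z, V.embF_rest_z, Fin.succ_pred, Fin.succ_pred]
        exact h3
    · intro q hq
      simp only [crossSet, Finset.mem_filter, Finset.mem_univ, true_and] at hq ⊢
      obtain ⟨h1, h2, h3⟩ := hq
      rw [← V.embF_lt_embF, V.embF_rest_w, V.embF_rest_w] at h1
      rw [← V.embF_lt_embF, V.embF_rest_w, V.embF_rest_z] at h2
      rw [← V.embF_lt_embF, V.embF_rest_z, V.embF_rest_z] at h3
      exact ⟨⟨h1, h2, h3⟩, Fin.succ_ne_zero _⟩
    · intro p hp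
      exact Prod.ext (by simp) (by simp)
    · intro q hq
      exact Prod.ext (by simp) (by simp)
    · intro p hp
      rw [hF]
      simp only [Function.comp_apply, V.embF_rest_z, V.embF_rest_w, Fin.succ_pred]
  have hNrest : ∏ p ∈ (nestSet V).filter (fun p => ¬ p.1 = 0), G p
      = ∏ p ∈ nestSet V.rest,
          c ((eps ∘ V.embF) (V.rest.z p.1)) ((eps ∘ V.embF) (V.rest.z p.2))
            ((i ∘ V.embF) (V.rest.z p.1)) ((i ∘ V.embF) (V.rest.z p.2)) *
          c ((eps ∘ V.embF) (V.rest.z p.1)) ((eps ∘ V.embF) (V.rest.w p.2))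
            ((i ∘ V.embF) (V.rest.z p.1)) ((i ∘ V.embF) (V.rest.w p.2)) := by
    refine Finset.prod_bij' (fun p hp => (p.1.pred ?_, p.2.pred ?_))
      (fun q _ => (q.1.succ, q.2.succ)) ?_ ?_ ?_ ?_ ?_
    · simp only [nestSet, Finset.mem_filter] at hp
      exact hp.2
    · simp only [nestSet, Finset.mem_filter, Finset.mem_univ, true_and] at hp
      intro h0
      rw [h0] at hp
      have h1 : p.1 < (0 : Fin (n+1)) := V.mono.lt_iff_lt.mp hp.1.1
      exact absurd h1 (Fin.not_lt_zero _)
    · intro p hp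
      simp only [nestSet, Finset.mem_filter, Finset.mem_univ, true_and] at hp ⊢
      obtain ⟨⟨h1, h2, h3⟩, h0⟩ := hp
      refine ⟨?_, ?_, ?_⟩
      · rw [← V.embF_lt_embF, V.embF_rest_w, V.embF_rest_w, Fin.succ_pred, Fin.succ_pred]
        exact h1
      · rw [← V.embF_lt_embF, V.embF_rest_w, V.embF_rest_z, Fin.succ_pred]
        exact h2
      · rw [← V.embF_lt_embF, V.embF_rest_z, V.embF_rest_z, Fin.succ_pred, Fin.succ_pred]
        exact h3
    · intro q hq
      simp only [nestSet, Finset.mem_filter, Finset.mem_univ, true_and] at hq ⊢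
      obtain ⟨h1, h2, h3⟩ := hq
      rw [← V.embF_lt_embF, V.embF_rest_w, V.embF_rest_w] at h1
      rw [← V.embF_lt_embF, V.embF_rest_w, V.embF_rest_z] at h2
      rw [← V.embF_lt_embF, V.embF_rest_z, V.embF_rest_z] at h3
      exact ⟨⟨h1, h2, h3⟩, Fin.succ_ne_zero _⟩
    · intro p hp
      exact Prod.ext (by simp) (by simp)
    · intro q hq
      exact Prod.ext (by simp) (by simp)
    · intro p hp
      rw [hG]
      simp only [Function.comp_apply, V.embF_rest_z, V.embF_rest_w, Fin.succ_pred]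
  -- the one-letter coefficient product
  have hfin : (∏ k : Fin ((V.z 0 : ℕ) - 1),
        c (eps (V.z 0)) (eps ⟨1+(k:ℕ), by have := k.2; have := (V.z 0).2; omega⟩)
          (i (V.z 0)) (i ⟨1+(k:ℕ), by have := k.2; have := (V.z 0).2; omega⟩))
      = (∏ m ∈ Cr0, f (V.w m)) * ∏ m ∈ Ne0, f (V.z m) * f (V.w m) := by
    have hz2 := (V.z 0).2
    have hwzero := V.w_zero
    set T : Finset (Fin (2*(n+1))) :=
      Finset.univ.filter (fun a => 1 ≤ (a:ℕ) ∧ (a:ℕ) < (V.z 0:ℕ)) with hT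
    have memT : ∀ a : Fin (2*(n+1)), a ∈ T ↔ (1 ≤ (a:ℕ) ∧ (a:ℕ) < (V.z 0:ℕ)) := by
      intro a; simp [hT]
    set pos : Fin (n+1) × Bool → Fin (2*(n+1)) :=
      fun p => if p.2 then V.z p.1 else V.w p.1 with hposd
    have hbij : Function.Bijective pos := V.bij
    have step1 : (∏ k : Fin ((V.z 0 : ℕ) - 1),
        f ⟨1+(k:ℕ), by have := k.2; omega⟩) = ∏ a ∈ T, f a := by
      refine Finset.prod_bij'
        (fun k _ => (⟨1+(k:ℕ), by have := k.2; omega⟩ : Fin (2*(n+1))))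
        (fun a ha => (⟨(a:ℕ)-1, by rw [memT] at ha; omega⟩ : Fin ((V.z 0:ℕ)-1)))
        ?_ ?_ ?_ ?_ ?_
      · intro k _
        rw [memT]
        have := k.2
        constructor <;> simp <;> omega
      · intro a ha; exact Finset.mem_univ _
      · intro k _
        ext
        simp
      · intro a ha
        rw [memT] at ha
        ext
        simp
        omega
      · intro k _; rfl
    have step2 : ∏ a ∈ T, f a
        = ∏ p ∈ Finset.univ.filter (fun p => pos p ∈ T), f (pos p) := by
      refine Finset.prod_bij' (fun a ha => (Equiv.ofBijective pos hbij).symm a)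
        (fun p _ => pos p) ?_ ?_ ?_ ?_ ?_
      · intro a ha
        simp only [Finset.mem_filter, Finset.mem_univ, true_and]
        rw [Equiv.ofBijective_apply_symm_apply pos hbij a]
        exact ha
      · intro p hp
        simp only [Finset.mem_filter] at hp
        exact hp.2
      · intro a ha
        exact Equiv.ofBijective_apply_symm_apply _ _ _
      · intro p hp
        exact Equiv.ofBijective_symm_apply_apply _ _ _
      · intro a ha
        rw [Equiv.ofBijective_apply_symm_apply pos hbij a]
    have step3 : ∏ p ∈ Finset.univ.filter (fun p => pos p ∈ T), f (pos p)
        = ∏ m : Fin (n+1),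
            ((if V.z m ∈ T then f (V.z m) else 1) * (if V.w m ∈ T then f (V.w m) else 1)) := by
      rw [Finset.prod_filter, Fintype.prod_prod_type]
      refine Finset.prod_congr rfl fun m _ => ?_
      rw [Fintype.prod_bool]
      simp only [hposd]
      norm_num
    have hdisj : Disjoint Cr0 Ne0 := by
      rw [Finset.disjoint_left]
      intro m h1 h2
      rw [hCr0, Finset.mem_filter] at h1
      rw [hNe0, Finset.mem_filter] at h2
      exact absurd (h1.2.2.2.trans h2.2.2.2) (lt_irrefl _)
    have step4 : ∏ m : Fin (n+1),
          ((if V.z m ∈ T then f (V.z m) else 1) * (if V.w m ∈ T then f (V.w m) else 1))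
        = ∏ m ∈ Cr0 ∪ Ne0,
            ((if V.z m ∈ T then f (V.z m) else 1) * (if V.w m ∈ T then f (V.w m) else 1)) := by
      refine (Finset.prod_subset (Finset.subset_univ _) ?_).symm
      intro m _ hm
      simp only [hCr0, hNe0, Finset.mem_union, Finset.mem_filter, Finset.mem_univ, true_and,
        not_or] at hm
      obtain ⟨hm1, hm2⟩ := hm
      by_cases hm0 : m = 0
      · subst hm0
        rw [if_neg, if_neg, one_mul]
        · rw [memT]
          intro hc
          omega
        · rw [memT]
          intro hc
          exact absurd hc.2 (lt_irrefl _)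
      · have hwm := Fin.lt_def.mp (V.wz m)
        have hzne : V.z m ≠ V.z 0 := fun h => hm0 (V.z_inj h)
        have hw0m : V.w 0 < V.w m := V.mono (Fin.pos_of_ne_zero hm0)
        have hwne : (V.w m : ℕ) ≠ (V.z 0 : ℕ) := fun h => V.w_ne_z m 0 (Fin.ext h)
        rw [if_neg, if_neg, one_mul]
        · rw [memT]
          rintro ⟨hc1, hc2⟩
          rcases lt_or_gt_of_ne hzne with h | h
          · exact hm2 ⟨hw0m, V.wz m, h⟩
          · exact hm1 ⟨hw0m, Fin.lt_def.mpr (by omega), h⟩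
        · rw [memT]
          rintro ⟨hc1, hc2⟩
          exact hm2 ⟨hw0m, V.wz m, Fin.lt_def.mpr hc2⟩
    have step5 : ∏ m ∈ Cr0 ∪ Ne0,
          ((if V.z m ∈ T then f (V.z m) else 1) * (if V.w m ∈ T then f (V.w m) else 1))
        = (∏ m ∈ Cr0, f (V.w m)) * ∏ m ∈ Ne0, f (V.z m) * f (V.w m) := by
      rw [Finset.prod_union hdisj]
      congr 1
      · refine Finset.prod_congr rfl fun m hm => ?_
        rw [hCr0, Finset.mem_filter] at hm
        obtain ⟨-, h1, h2, h3⟩ := hm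
        have hv1 := Fin.lt_def.mp h1
        have hv2 := Fin.lt_def.mp h2
        have hv3 := Fin.lt_def.mp h3
        rw [if_neg, if_pos, one_mul]
        · rw [memT]; omega
        · rw [memT]; omega
      · refine Finset.prod_congr rfl fun m hm => ?_
        rw [hNe0, Finset.mem_filter] at hm
        obtain ⟨-, h1, h2, h3⟩ := hm
        have hv1 := Fin.lt_def.mp h1
        have hv2 := Fin.lt_def.mp h2
        have hv3 := Fin.lt_def.mp h3
        rw [if_pos, if_pos]
        · rw [memT]; omega
        · rw [memT]; omega
    calc (∏ k : Fin ((V.z 0 : ℕ) - 1),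
        c (eps (V.z 0)) (eps ⟨1+(k:ℕ), by have := k.2; omega⟩)
          (i (V.z 0)) (i ⟨1+(k:ℕ), by have := k.2; omega⟩))
        = ∏ a ∈ T, f a := step1
      _ = _ := by rw [step2, step3, step4, step5]
  show (∏ p ∈ crossSet V, F p) * ∏ p ∈ nestSet V, G p = _
  rw [hsplitC, hsplitN, hC0, hN0, hCrest, hNrest, hfin]
  show _ = _ * ((∏ p ∈ crossSet V.rest, _) * ∏ p ∈ nestSet V.rest, _)
  ring

end BetaRec


end Restriction


section MainInd

open PairPartition

variable {A : Type*} [Ring A] [StarRing A] [Algebra ℂ A]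

set_option maxHeartbeats 2000000 in
lemma main_ind (φ : A →ₗ[ℂ] ℂ) (b : ℕ → A) (c : Bool → Bool → ℕ → ℕ → ℝ)
    (hcond : StarCond φ b c) :
    ∀ n (V : PairPartition n) (i : Fin (2*n) → ℕ) (eps : Fin (2*n) → Bool),
      tupleEquiv V i →
      listProd b (List.ofFn fun k => (i k, eps k))
        = ((betaProd n V eps c i : ℝ) : ℂ) •
          (List.ofFn fun j : Fin n =>
            sel (b (i (V.w j))) (eps (V.w j)) * sel (b (i (V.z j))) (eps (V.z j))).prod := by
  intro n
  induction n with
  | zero =>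
    intro V i eps hiV
    have h1 : (List.ofFn fun k : Fin (2*0) => (i k, eps k)) = [] := by
      simp
    have h2 : (List.ofFn fun j : Fin 0 =>
        sel (b (i (V.w j))) (eps (V.w j)) * sel (b (i (V.z j))) (eps (V.z j))) = [] := by
      simp
    rw [h1, h2]
    have h3 : betaProd 0 V eps c i = 1 := by
      have hcr : crossSet V = ∅ := Finset.eq_empty_of_isEmpty _
      have hne : nestSet V = ∅ := Finset.eq_empty_of_isEmpty _
      rw [betaProd, hcr, hne]
      simp
    rw [h3]
    simp [listProd]
  | succ n IH =>
    intro V i eps hiV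
    have hz1 : 1 ≤ (V.z 0 : ℕ) := V.z0_pos
    have hz2 : (V.z 0 : ℕ) < 2*(n+1) := (V.z 0).2
    have hw0 : (V.w 0 : ℕ) = 0 := V.w_zero
    have hw0F : V.w 0 = ⟨0, by omega⟩ := Fin.ext hw0
    set g : Fin (2*(n+1)) → ℕ × Bool := fun k => (i k, eps k) with hg
    set A' : List (ℕ × Bool) :=
      List.ofFn fun k : Fin ((V.z 0 : ℕ)-1) => g ⟨1+(k:ℕ), by have := k.2; omega⟩ with hA'
    set B : List (ℕ × Bool) :=
      List.ofFn fun k : Fin (2*(n+1)-(V.z 0 : ℕ)-1) =>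
        g ⟨(V.z 0 : ℕ)+1+(k:ℕ), by have := k.2; omega⟩ with hB
    have hsplitA : List.ofFn g = (g ⟨0, by omega⟩ :: A') ++ g (V.z 0) :: B := by
      apply List.ext_getElem
      · simp [hA', hB]; omega
      · intro t h1 h2
        simp only [hA', hB, List.getElem_ofFn, List.getElem_append, List.getElem_cons,
          List.length_cons, List.length_ofFn]
        split_ifs <;> first
          | (congr 1; exact Fin.ext (by simp; omega))
          | (congr 1; exact Fin.ext (by simp at *; omega))
    -- the letters of A' have indices different from i (V.z 0)
    have hne : ∀ p ∈ A', p.1 ≠ (g (V.z 0)).1 := by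
      intro p hp
      rw [hA', List.mem_ofFn] at hp
      obtain ⟨k, rfl⟩ := hp
      show i _ ≠ i (V.z 0)
      intro hcon
      rcases (hiV _ (V.z 0)).mp hcon with h | ⟨m, ⟨ha, hb⟩ | ⟨ha, hb⟩⟩
      · have := congrArg Fin.val h
        simp at this
        have := k.2
        omega
      · have hm0 : m = 0 := V.z_inj hb.symm
        subst hm0
        have := congrArg Fin.val ha
        rw [hw0] at this
        simp at this
      · exact V.w_ne_z m 0 hb.symm
    have hmove := move_left φ b c hcond (g (V.z 0)) A' hne
    -- word of the restricted partition
    have hword : A' ++ B = List.ofFn fun k : Fin (2*n) =>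
        ((i ∘ V.embF) k, (eps ∘ V.embF) k) := by
      apply List.ext_getElem
      · simp [hA', hB]; omega
      · intro t h1 h2
        simp only [hA', hB, List.getElem_ofFn, List.getElem_append, List.length_ofFn]
        split_ifs with ht
        · simp only [List.getElem_ofFn, Function.comp_apply]
          show g _ = g (V.embF _)
          congr 1
          refine Fin.ext ?_
          simp only [PairPartition.embF, embN]
          split_ifs <;> omega
        · simp only [List.getElem_ofFn, Function.comp_apply]
          show g _ = g (V.embF _)
          congr 1
          refine Fin.ext ?_
          simp only [PairPartition.embF, embN]
          simp at ht ⊢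
          split_ifs <;> omega
    have hIH := IH V.rest (i ∘ V.embF) (eps ∘ V.embF) (V.rest_tupleEquiv i hiV)
    -- assemble
    rw [hsplitA, listProd_append, listProd_cons, listProd_cons]
    have hassoc : (sel (b (g ⟨0, by omega⟩).1) (g ⟨0, by omega⟩).2 * listProd b A') *
        (sel (b (g (V.z 0)).1) (g (V.z 0)).2 * listProd b B)
        = sel (b (g ⟨0, by omega⟩).1) (g ⟨0, by omega⟩).2 *
          ((listProd b A' * sel (b (g (V.z 0)).1) (g (V.z 0)).2) * listProd b B) := by
      rw [mul_assoc, mul_assoc]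
    rw [hassoc]
    rw [hmove]
    rw [smul_mul_assoc, mul_smul_comm, mul_assoc, ← listProd_append]
    rw [hword]
    rw [hIH]
    rw [mul_smul_comm, mul_smul_comm, smul_smul, ← Complex.ofReal_mul]
    rw [beta_rec V eps c i]
    -- identify the scalar coefficients
    have hco : ((A'.map fun p => c (g (V.z 0)).2 p.2 (g (V.z 0)).1 p.1).prod)
        = ∏ k : Fin ((V.z 0 : ℕ) - 1),
          c (eps (V.z 0)) (eps ⟨1+(k:ℕ), by have := k.2; omega⟩)
            (i (V.z 0)) (i ⟨1+(k:ℕ), by have := k.2; omega⟩) := by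
      rw [hA', List.map_ofFn, List.prod_ofFn]
      rfl
    rw [hco]
    -- identify the products of pairs
    congr 1
    rw [List.ofFn_succ, List.prod_cons, ← mul_assoc]
    have hfun : (fun j : Fin n =>
          sel (b ((i ∘ V.embF) (V.rest.w j))) ((eps ∘ V.embF) (V.rest.w j)) *
            sel (b ((i ∘ V.embF) (V.rest.z j))) ((eps ∘ V.embF) (V.rest.z j)))
        = fun j : Fin n => sel (b (i (V.w j.succ))) (eps (V.w j.succ)) *
            sel (b (i (V.z j.succ))) (eps (V.z j.succ)) := by
      funext j
      simp only [Function.comp_apply, V.embF_rest_w, V.embF_rest_z]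
    rw [hfun]
    congr 1
    rw [hw0F]
  
end MainInd

/-- for a tuple `i ∼ V` with `ε(w_j) ≠ ε(z_j)` on each block,
the mixed moment factors over the pairs, up to the coefficient `β` collecting
one commutation coefficient per crossing and two per nesting of `V`. -/
theorem moment_factors_over_pairs {A : Type*} [Ring A] [StarRing A] [Algebra ℂ A]
    [StarModule ℂ A]
    (φ : A →ₗ[ℂ] ℂ) (hφ1 : φ 1 = 1) (hpos : ∀ a : A, 0 ≤ φ (a * star a))
    (b : ℕ → A) (c : Bool → Bool → ℕ → ℕ → ℝ)
    (hnz : NonzeroCoeff c) (hAB : RelAB c) (hcond : StarCond φ b c)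
    (n : ℕ) (V : PairPartition n)
    (i : Fin (2 * n) → ℕ) (hiV : tupleEquiv V i)
    (eps : Fin (2 * n) → Bool) (heps : ∀ j : Fin n, eps (V.w j) ≠ eps (V.z j)) :
    φ (tupProd b i eps)
      = ((betaProd n V eps c i : ℝ) : ℂ) *
        ∏ j : Fin n, φ (sel (b (i (V.w j))) (eps (V.w j)) * sel (b (i (V.z j))) (eps (V.z j))) := by
  classical
  have hib : ∀ j : Fin n, i (V.z j) = i (V.w j) := fun j =>
    ((hiV (V.w j) (V.z j)).mpr (Or.inr ⟨j, Or.inl ⟨rfl, rfl⟩⟩)).symm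
  have htup : tupProd b i eps = listProd b (List.ofFn fun k => (i k, eps k)) := by
    rw [tupProd, listProd, List.map_ofFn]
    rfl
  rw [htup, main_ind φ b c hcond n V i eps hiV, _root_.map_smul, smul_eq_mul]
  congr 1
  have hL := phi_pairs φ b c hnz hAB hcond
      (List.ofFn fun j : Fin n => (i (V.w j), eps (V.w j), eps (V.z j))) ?_ ?_
  · rw [List.map_ofFn, List.map_ofFn] at hL
    have h1 : ((fun p : ℕ × Bool × Bool => sel (b p.1) p.2.1 * sel (b p.1) p.2.2) ∘
        fun j : Fin n => (i (V.w j), eps (V.w j), eps (V.z j)))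
        = fun j : Fin n =>
            sel (b (i (V.w j))) (eps (V.w j)) * sel (b (i (V.z j))) (eps (V.z j)) := by
      funext j
      simp [Function.comp, hib j]
    rw [h1] at hL
    rw [hL, List.prod_ofFn]
    refine Finset.prod_congr rfl fun j _ => ?_
    simp [Function.comp, hib j]
  · rw [List.pairwise_ofFn]
    intro j k hjk
    simp only
    intro hcon
    rcases (hiV (V.w j) (V.w k)).mp hcon with h | ⟨m, ⟨ha, hb⟩ | ⟨ha, hb⟩⟩
    · exact absurd (V.mono.injective h) (Fin.ne_of_lt hjk)
    · exact V.w_ne_z k m hb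
    · exact V.w_ne_z j m ha
  · intro p hp
    rw [List.mem_ofFn] at hp
    obtain ⟨j, rfl⟩ := hp
    exact heps j
end
end

section
/- Let {μ_{ε,ε'}(i,j)}_{i≠j, ε,ε'∈{1,*}} be nonzero real numbers satisfying relations (A)–(B), and suppose that for all i ≠ j and ALL choices of ε_i, ε_i', ε_j, ε_j' ∈ {1,*}: μ_{ε_i,ε_j'}(j,i) · μ_{ε_i,ε_j}(j,i) · μ_{ε_i',ε_j'}(j,i) · μ_{ε_i',ε_j}(j,i) = 1. Then every coefficient takes values in {−1, 1}: μ_{ε,ε'}(i,j) ∈ {−1, 1} for all i ≠ j and ε, ε' ∈ {1,*}. -/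
open Filter MeasureTheory ProbabilityTheory
open scoped BigOperators ComplexOrder Classical

noncomputable section

/-- under relations (A)–(B), if for all `i ≠ j` and ALL choices of
exponents the product `μ_{ε_i,ε_j'}(j,i) μ_{ε_i,ε_j}(j,i) μ_{ε_i',ε_j'}(j,i) μ_{ε_i',ε_j}(j,i)`
equals 1, then every coefficient takes values in `{-1, 1}`. -/
theorem coeff_pm_one_of_all_products_one
    (c : Bool → Bool → ℕ → ℕ → ℝ) (hnz : NonzeroCoeff c) (hAB : RelAB c)
    (h : ∀ i j : ℕ, i ≠ j → ∀ ei ei' ej ej' : Bool,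
      c ei ej' j i * c ei ej j i * c ei' ej' j i * c ei' ej j i = 1) :
    ∀ i j : ℕ, i ≠ j → ∀ e e' : Bool, c e e' i j = 1 ∨ c e e' i j = -1 := by
  intro i j hij e e'
  have h4 := h i j hij e' e' e e
  set x := c e' e j i with hx
  have hx2 : x ^ 2 = 1 := by nlinarith [sq_nonneg (x^2 - 1), sq_nonneg (x^2 + 1), sq_nonneg x]
  have hpm : x = 1 ∨ x = -1 := by
    rcases mul_eq_zero.mp (show (x - 1) * (x + 1) = 0 by nlinarith) with h1 | h1
    · left; linarith
    · right; linarith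
  have heq := hAB.1 i j hij e e'
  rcases hpm with h1 | h1 <;> rw [heq, ← hx, h1] <;> norm_num
end
end

section
/- Let (𝒜, φ) be a non-commutative probability space, let i < j, and let b_i, b_j ∈ 𝒜 satisfy the commutation relations b_i^ε b_j^{ε'} = μ_{ε',ε}(j,i) b_j^{ε'} b_i^ε (ε, ε' ∈ {1,*}) with nonzero real coefficients satisfying relations (A)–(B), and suppose φ factors over naturally ordered products in {b_i, b_j}. Then φ(b_i b_j b_j^* b_i^*) = μ_{*,1}(i,j) · μ_{*,*}(i,j) · φ(b_i b_i^*) · φ(b_j b_j^*). Consequently, if φ is positive (φ(a a^*) ≥ 0 for all a ∈ 𝒜) and φ(b_i b_i^*) > 0 and φ(b_j b_j^*) > 0, then μ_{*,1}(i,j) and μ_{*,*}(i,j) have the same sign: μ_{*,1}(i,j)/|μ_{*,1}(i,j)| = μ_{*,*}(i,j)/|μ_{*,*}(i,j)|. -/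
open Filter MeasureTheory ProbabilityTheory
open scoped BigOperators ComplexOrder Classical

noncomputable section

/-- with `x = b_i`, `y = b_j` (`i < j`) commuting via coefficients
satisfying (A)–(B) and `φ` factoring over naturally ordered products in `{b_i, b_j}`,
`φ(b_i b_j b_j^∗ b_i^∗) = μ_{∗,1}(i,j) μ_{∗,∗}(i,j) φ(b_i b_i^∗) φ(b_j b_j^∗)`;
consequently if `φ(b_i b_i^∗) > 0` and `φ(b_j b_j^∗) > 0` then `μ_{∗,1}(i,j)` and
`μ_{∗,∗}(i,j)` have the same sign. -/
theorem positivity_constrains_signs {A : Type*} [Ring A] [StarRing A] [Algebra ℂ A]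
    [StarModule ℂ A]
    (φ : A →ₗ[ℂ] ℂ) (hφ1 : φ 1 = 1) (hpos : ∀ a : A, 0 ≤ φ (a * star a))
    (i j : ℕ) (hij : i < j) (x y : A)
    (c : Bool → Bool → ℕ → ℕ → ℝ) (hnz : NonzeroCoeff c) (hAB : RelAB c)
    (hcomm₁ : ∀ e e' : Bool,
      sel x e * sel y e' = ((c e' e j i : ℝ) : ℂ) • (sel y e' * sel x e))
    (hcomm₂ : ∀ e e' : Bool,
      sel y e * sel x e' = ((c e' e i j : ℝ) : ℂ) • (sel x e' * sel y e))
    (hfac : ∀ l₁ l₂ : List Bool,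
      φ ((l₁.map (sel x)).prod * (l₂.map (sel y)).prod)
        = φ ((l₁.map (sel x)).prod) * φ ((l₂.map (sel y)).prod)) :
    φ (x * y * star y * star x)
        = ((c true false i j * c true true i j : ℝ) : ℂ) *
          (φ (x * star x) * φ (y * star y)) ∧
    (0 < φ (x * star x) → 0 < φ (y * star y) →
      c true false i j / |c true false i j| = c true true i j / |c true true i j|) := by
  have hne : i ≠ j := hij.ne
  have h1 : star y * star x = ((c true true i j : ℝ) : ℂ) • (star x * star y) := by
    simpa [sel] using hcomm₂ true true
  have h2 : y * star x = ((c true false i j : ℝ) : ℂ) • (star x * y) := by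
    simpa [sel] using hcomm₂ false true
  have key : x * y * star y * star x
      = ((c true false i j * c true true i j : ℝ) : ℂ) • ((x * star x) * (y * star y)) := by
    have e1 : x * y * star y * star x = x * (y * (star y * star x)) := by
      rw [mul_assoc, mul_assoc]
    have h3 : x * (y * star x) * star y = x * (y * (star x * star y)) := by
      rw [mul_assoc, mul_assoc]
    rw [e1, h1, mul_smul_comm, mul_smul_comm, ← h3, h2, mul_smul_comm, smul_mul_assoc,
      smul_smul]
    have e2 : ((c true false i j * c true true i j : ℝ) : ℂ)
        = ((c true true i j : ℝ) : ℂ) * ((c true false i j : ℝ) : ℂ) := by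
      push_cast; ring
    rw [e2]
    congr 1
    simp [mul_assoc]
  have hf' : φ (x * star x * (y * star y)) = φ (x * star x) * φ (y * star y) := by
    simpa [sel] using hfac [false, true] ([false, true])
  have main : φ (x * y * star y * star x)
      = ((c true false i j * c true true i j : ℝ) : ℂ) *
        (φ (x * star x) * φ (y * star y)) := by
    rw [key, LinearMap.map_smul, smul_eq_mul, hf']
  refine ⟨main, fun hx hy => ?_⟩
  set c1 := c true false i j with hc1
  set c2 := c true true i j with hc2
  have hc1ne : c1 ≠ 0 := hnz i j hne true false
  have hc2ne : c2 ≠ 0 := hnz i j hne true true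
  -- positivity of φ((x*y) * star (x*y))
  have hp := hpos (x * y)
  have hstar : star (x * y) = star y * star x := by simp [star_mul]
  rw [hstar, ← mul_assoc] at hp
  rw [main] at hp
  have hxre : 0 < (φ (x * star x)).re ∧ (φ (x * star x)).im = 0 := by
    rw [Complex.lt_def] at hx; simpa using ⟨hx.1, hx.2.symm⟩
  have hyre : 0 < (φ (y * star y)).re ∧ (φ (y * star y)).im = 0 := by
    rw [Complex.lt_def] at hy; simpa using ⟨hy.1, hy.2.symm⟩
  have hre : 0 ≤ (((c1 * c2 : ℝ) : ℂ) * (φ (x * star x) * φ (y * star y))).re := by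
    rw [Complex.le_def] at hp; simpa using hp.1
  have hre' : 0 ≤ (c1 * c2) * ((φ (x * star x)).re * (φ (y * star y)).re) := by
    simpa [Complex.mul_re, Complex.ofReal_re, Complex.ofReal_im, hxre.2, hyre.2] using hre
  have hcc : 0 < c1 * c2 := by
    rcases (mul_ne_zero hc1ne hc2ne).lt_or_gt with h | h
    · exfalso
      nlinarith [hxre.1, hyre.1, mul_pos hxre.1 hyre.1]
    · exact h
  rcases hc1ne.lt_or_gt with h1' | h1'
  · have h2' : c2 < 0 := by nlinarith
    rw [abs_of_neg h1', abs_of_neg h2']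
    field_simp
  · have h2' : 0 < c2 := by nlinarith
    rw [abs_of_pos h1', abs_of_pos h2']
    field_simp
end
end
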